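/- Let A₁, A₂ ∈ GL₂⁺(ℚ) be non-equivalent matrices. Then there exists a matrix B ∈ GL₂⁺(ℚ) such that nlc(A₁B) ≠ nlc(A₂B). -/

import Mathlib

/-- The gcd of two rationals: the non-negative rational `δ` with `aℤ + bℤ = δℤ`. -/
def ratGcd (a b : ℚ) : ℚ :=
  (Int.gcd (a.num * (b.den : ℤ)) (b.num * (a.den : ℤ)) : ℚ) / ((a.den : ℚ) * (b.den : ℚ))

lemma ratGcd_nonneg (a b : ℚ) : 0 ≤ ratGcd a b := by
  unfold ratGcd; positivity

lemma ratGcd_one_zero : ratGcd 1 0 = 1 := by norm_num [ratGcd]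

lemma ratGcd_zero_one : ratGcd 0 1 = 1 := by norm_num [ratGcd]

lemma ratGcd_dvd (a b : ℚ) : ∃ m n : ℤ, a = ratGcd a b * m ∧ b = ratGcd a b * n := by
  set G : ℕ := Int.gcd (a.num * (b.den : ℤ)) (b.num * (a.den : ℤ)) with hG
  by_cases h0 : G = 0
  · have h1 : a.num * (b.den : ℤ) = 0 := by
      have := Int.gcd_eq_zero_iff.mp (by exact_mod_cast h0)
      exact this.1
    have h2 : b.num * (a.den : ℤ) = 0 := by
      have := Int.gcd_eq_zero_iff.mp (by exact_mod_cast h0)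
      exact this.2
    have ha : a = 0 := by
      have : a.num = 0 := by
        rcases mul_eq_zero.mp h1 with h | h
        · exact h
        · exact absurd h (by exact_mod_cast b.den_nz)
      exact Rat.zero_iff_num_zero.mpr this
    have hb : b = 0 := by
      have : b.num = 0 := by
        rcases mul_eq_zero.mp h2 with h | h
        · exact h
        · exact absurd h (by exact_mod_cast a.den_nz)
      exact Rat.zero_iff_num_zero.mpr this
    exact ⟨0, 0, by simp [ha], by simp [hb]⟩
  · have hd1 : (G:ℤ) ∣ a.num * (b.den : ℤ) := Int.gcd_dvd_left _ _
    have hd2 : (G:ℤ) ∣ b.num * (a.den : ℤ) := Int.gcd_dvd_right _ _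
    obtain ⟨m, hm⟩ := hd1
    obtain ⟨n, hn⟩ := hd2
    refine ⟨m, n, ?_, ?_⟩
    · have hden : ((a.den : ℚ) * (b.den : ℚ)) ≠ 0 := by positivity
      unfold ratGcd
      rw [← hG]
      rw [div_mul_eq_mul_div, eq_div_iff hden]
      have h : ((G : ℚ) * m) = ((a.num : ℚ) * (b.den : ℚ)) := by exact_mod_cast hm.symm
      rw [h]
      nth_rewrite 1 [← Rat.num_div_den a]
      have hda : (a.den : ℚ) ≠ 0 := by positivity
      field_simp
    · have hden : ((a.den : ℚ) * (b.den : ℚ)) ≠ 0 := by positivity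
      unfold ratGcd
      rw [← hG]
      rw [div_mul_eq_mul_div, eq_div_iff hden]
      have h : ((G : ℚ) * n) = ((b.num : ℚ) * (a.den : ℚ)) := by exact_mod_cast hn.symm
      rw [h]
      nth_rewrite 1 [← Rat.num_div_den b]
      have hdb : (b.den : ℚ) ≠ 0 := by positivity
      field_simp

/-- Two rational matrices are equivalent if `A' = λ B A` for some `B ∈ SL₂(ℤ)`
and non-zero rational `λ`. -/
def MatEquiv (A A' : Matrix (Fin 2) (Fin 2) ℚ) : Prop :=
  ∃ (B : Matrix (Fin 2) (Fin 2) ℤ) (l : ℚ), B.det = 1 ∧ l ≠ 0 ∧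
    A' = l • ((B.map (Int.cast : ℤ → ℚ)) * A)

/-- The normalized left content of a matrix `A = [[a,b],[c,d]]`, namely `gcd(a,c)² / det A`. -/
noncomputable def nlc (A : Matrix (Fin 2) (Fin 2) ℚ) : ℚ :=
  (ratGcd (A 0 0) (A 1 0)) ^ 2 / A.det

/-- For non-equivalent `A₁, A₂ ∈ GL₂⁺(ℚ)` there is `B ∈ GL₂⁺(ℚ)` with
`nlc(A₁B) ≠ nlc(A₂B)`. -/
theorem nlc_separates_two (A₁ A₂ : Matrix (Fin 2) (Fin 2) ℚ)
    (h₁ : 0 < A₁.det) (h₂ : 0 < A₂.det) (hne : ¬ MatEquiv A₁ A₂) :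
    ∃ B : Matrix (Fin 2) (Fin 2) ℚ, 0 < B.det ∧ nlc (A₁ * B) ≠ nlc (A₂ * B) := by
  by_contra hcon
  push_neg at hcon
  apply hne
  have hA₁ : IsUnit A₁.det := isUnit_iff_ne_zero.mpr (ne_of_gt h₁)
  have hinv : A₁ * A₁⁻¹ = 1 := Matrix.mul_nonsing_inv A₁ hA₁
  have hdetinv : A₁⁻¹.det = A₁.det⁻¹ := by
    rw [Matrix.det_nonsing_inv, Ring.inverse_eq_inv']
  have hdinvpos : 0 < A₁⁻¹.det := by rw [hdetinv]; positivity
  set M : Matrix (Fin 2) (Fin 2) ℚ := A₂ * A₁⁻¹ with hM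
  have hdetM : 0 < M.det := by
    rw [hM, Matrix.det_mul, hdetinv]; positivity
  -- nlc of identity is 1
  have hnlc1 : nlc (1 : Matrix (Fin 2) (Fin 2) ℚ) = 1 := by
    simp [nlc, Matrix.one_apply, ratGcd_one_zero]
  -- first test: B = A₁⁻¹
  have e1 : nlc M = 1 := by
    have := hcon A₁⁻¹ hdinvpos
    rw [hinv, hnlc1, ← hM] at this
    exact this.symm
  set μ : ℚ := ratGcd (M 0 0) (M 1 0) with hμ
  have hμ2 : μ ^ 2 = M.det := by
    rw [nlc, div_eq_one_iff_eq (ne_of_gt hdetM)] at e1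
    exact e1
  have hμpos : 0 < μ := by
    rcases lt_or_eq_of_le (ratGcd_nonneg (M 0 0) (M 1 0)) with h | h
    · exact h
    · exfalso
      have hz : μ = 0 := hμ.trans h.symm
      rw [hz] at hμ2
      simp at hμ2
      rw [← hμ2] at hdetM
      exact lt_irrefl 0 hdetM
  -- second test: B = A₁⁻¹ * S
  set S : Matrix (Fin 2) (Fin 2) ℚ := !![0, -1; 1, 0] with hS
  have hdetS : S.det = 1 := by rw [hS]; simp [Matrix.det_fin_two_of]
  have e2 : ratGcd (M 0 1) (M 1 1) = μ := by
    have hb : 0 < (A₁⁻¹ * S).det := by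
      rw [Matrix.det_mul, hdetS]; simpa using hdinvpos
    have := hcon (A₁⁻¹ * S) hb
    rw [← mul_assoc, hinv, one_mul, ← mul_assoc, ← hM] at this
    have hMS00 : (M * S) 0 0 = M 0 1 := by
      rw [Matrix.mul_apply, Fin.sum_univ_two, hS]; simp
    have hMS10 : (M * S) 1 0 = M 1 1 := by
      rw [Matrix.mul_apply, Fin.sum_univ_two, hS]; simp
    have hdetMS : (M * S).det = M.det := by rw [Matrix.det_mul, hdetS, mul_one]
    have hnlcS : nlc S = 1 := by
      rw [nlc, hdetS]
      simp [hS, ratGcd_zero_one]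
    rw [hnlcS, nlc, hMS00, hMS10, hdetMS] at this
    have hsq : ratGcd (M 0 1) (M 1 1) ^ 2 = μ ^ 2 := by
      rw [hμ2]
      field_simp at this
      linarith [this]
    have hnn := ratGcd_nonneg (M 0 1) (M 1 1)
    nlinarith [hsq, hnn, hμpos]
  -- extract integer entries
  obtain ⟨b00, b10, hb00, hb10⟩ := ratGcd_dvd (M 0 0) (M 1 0)
  obtain ⟨b01, b11, hb01, hb11⟩ := ratGcd_dvd (M 0 1) (M 1 1)
  rw [← hμ] at hb00 hb10
  rw [e2] at hb01 hb11
  refine ⟨!![b00, b01; b10, b11], μ, ?_, ne_of_gt hμpos, ?_⟩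
  · -- determinant 1
    have hd : M.det = M 0 0 * M 1 1 - M 0 1 * M 1 0 := Matrix.det_fin_two M
    rw [hb00, hb01, hb10, hb11] at hd
    have : ((b00 * b11 - b01 * b10 : ℤ) : ℚ) = 1 := by
      have hμne : μ ≠ 0 := ne_of_gt hμpos
      have : μ ^ 2 * ((b00 * b11 - b01 * b10 : ℤ) : ℚ) = μ ^ 2 := by
        conv_rhs => rw [hμ2, hd]
        push_cast; ring
      have hμ2ne : μ ^ 2 ≠ 0 := pow_ne_zero 2 hμne
      exact mul_left_cancel₀ hμ2ne (by rw [this, mul_one])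
    have := this
    rw [Matrix.det_fin_two_of]
    exact_mod_cast this
  · -- A₂ = μ • (B.map cast * A₁)
    have hBM : μ • ((!![b00, b01; b10, b11] : Matrix (Fin 2) (Fin 2) ℤ).map (Int.cast : ℤ → ℚ)) = M := by
      ext i j
      fin_cases i <;> fin_cases j <;>
        simp [Matrix.map_apply, hb00, hb01, hb10, hb11]
    calc A₂ = M * A₁ := by
              rw [hM, Matrix.mul_assoc, Matrix.nonsing_inv_mul A₁ hA₁, Matrix.mul_one]
      _ = (μ • ((!![b00, b01; b10, b11] : Matrix (Fin 2) (Fin 2) ℤ).map (Int.cast : ℤ → ℚ))) * A₁ := by rw [hBM]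
      _ = μ • (((!![b00, b01; b10, b11] : Matrix (Fin 2) (Fin 2) ℤ).map (Int.cast : ℤ → ℚ)) * A₁) := by
              rw [Matrix.smul_mul]
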